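/- arXiv:1705.01601 — 2 statements merged into one kernel-verified Lean document; each statement's English description precedes it below -/
import Mathlib

section
/- Merging increases Gaussian model entropy: let X ⊂ ℝ^N be a finite data set partitioned into clusters Y₁ and Y₂ whose sample covariance matrices Σ₁, Σ₂ are positive definite, and let p = |Y₁|/|X|. Then p·H(N(μ₁,Σ₁)) + (1−p)·H(N(μ₂,Σ₂)) ≤ H(N(μ_X,Σ_X)), where H(N(μ,Σ)) = (N/2)·ln(2πe) + (1/2)·ln det Σ is the differential entropy of the Gaussian N(μ,Σ). -/
open Matrix Finset

noncomputable def sampleMean {N : ℕ} (S : Finset (Fin N → ℝ)) : Fin N → ℝ :=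
  (S.card : ℝ)⁻¹ • ∑ x ∈ S, x

noncomputable def sampleCov {N : ℕ} (S : Finset (Fin N → ℝ)) : Matrix (Fin N) (Fin N) ℝ :=
  (S.card : ℝ)⁻¹ • ∑ x ∈ S, vecMulVec (x - sampleMean S) (x - sampleMean S)

lemma sampleMean_apply {N : ℕ} (S : Finset (Fin N → ℝ)) (i : Fin N) :
    sampleMean S i = (S.card : ℝ)⁻¹ * ∑ x ∈ S, x i := by
  simp [sampleMean, Finset.sum_apply]

lemma sampleCov_apply {N : ℕ} (S : Finset (Fin N → ℝ)) (i j : Fin N) :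
    sampleCov S i j
      = (S.card : ℝ)⁻¹ * ∑ x ∈ S, (x i - sampleMean S i) * (x j - sampleMean S j) := by
  simp [sampleCov, Matrix.sum_apply, vecMulVec_apply]

lemma centered_sum {N : ℕ} (S : Finset (Fin N → ℝ)) (hS : S.Nonempty) (i : Fin N) :
    ∑ x ∈ S, (x i - sampleMean S i) = 0 := by
  have hc : (S.card : ℝ) ≠ 0 := Nat.cast_ne_zero.2 (Finset.card_pos.2 hS).ne'
  rw [Finset.sum_sub_distrib, Finset.sum_const, sampleMean_apply]
  field_simp
  rw [nsmul_eq_mul, mul_div_assoc', mul_div_cancel_left₀ _ hc, sub_self]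

lemma shift_sum {N : ℕ} (S : Finset (Fin N → ℝ)) (hS : S.Nonempty) (m : Fin N → ℝ)
    (i j : Fin N) :
    ∑ x ∈ S, (x i - m i) * (x j - m j)
      = ∑ x ∈ S, (x i - sampleMean S i) * (x j - sampleMean S j)
        + (S.card : ℝ) * ((sampleMean S i - m i) * (sampleMean S j - m j)) := by
  set μ := sampleMean S
  have key : ∀ x : Fin N → ℝ, (x i - m i) * (x j - m j)
      = (x i - μ i) * (x j - μ j) + (μ i - m i) * (x j - μ j)
        + (x i - μ i) * (μ j - m j) + (μ i - m i) * (μ j - m j) := fun x => by ring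
  rw [Finset.sum_congr rfl fun x _ => key x]
  rw [Finset.sum_add_distrib, Finset.sum_add_distrib, Finset.sum_add_distrib,
    ← Finset.mul_sum, ← Finset.sum_mul, centered_sum S hS i, centered_sum S hS j,
    Finset.sum_const]
  ring

lemma cov_union {N : ℕ} (Y₁ Y₂ : Finset (Fin N → ℝ)) (h₁ : Y₁.Nonempty) (h₂ : Y₂.Nonempty)
    (hdisj : Disjoint Y₁ Y₂) :
    sampleCov (Y₁ ∪ Y₂)
      = ((Y₁.card : ℝ) / (Y₁ ∪ Y₂).card) • sampleCov Y₁
        + ((Y₂.card : ℝ) / (Y₁ ∪ Y₂).card) • sampleCov Y₂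
        + (((Y₁.card : ℝ) / (Y₁ ∪ Y₂).card) * ((Y₂.card : ℝ) / (Y₁ ∪ Y₂).card)) •
            vecMulVec (sampleMean Y₁ - sampleMean Y₂) (sampleMean Y₁ - sampleMean Y₂) := by
  have hcard : ((Y₁ ∪ Y₂).card : ℝ) = (Y₁.card : ℝ) + Y₂.card := by
    rw [Finset.card_union_of_disjoint hdisj]; push_cast; ring
  have hn₁ : (0:ℝ) < Y₁.card := by exact_mod_cast Finset.card_pos.2 h₁
  have hn₂ : (0:ℝ) < Y₂.card := by exact_mod_cast Finset.card_pos.2 h₂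
  have hn : (0:ℝ) < ((Y₁ ∪ Y₂).card : ℝ) := by rw [hcard]; linarith
  ext i j
  have hmean : ∀ k : Fin N, sampleMean (Y₁ ∪ Y₂) k
      = (((Y₁.card : ℝ) * sampleMean Y₁ k + (Y₂.card : ℝ) * sampleMean Y₂ k))
          / ((Y₁ ∪ Y₂).card : ℝ) := by
    intro k
    rw [sampleMean_apply, Finset.sum_union hdisj, sampleMean_apply, sampleMean_apply]
    field_simp
  have hsum : ∀ (S : Finset (Fin N → ℝ)), S.Nonempty → ∀ a b : Fin N,
      ∑ x ∈ S, (x a - sampleMean S a) * (x b - sampleMean S b)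
        = (S.card : ℝ) * sampleCov S a b := by
    intro S hS a b
    have hc : (S.card : ℝ) ≠ 0 := Nat.cast_ne_zero.2 (Finset.card_pos.2 hS).ne'
    rw [sampleCov_apply, ← mul_assoc, mul_inv_cancel₀ hc, one_mul]
  simp only [Matrix.add_apply, Matrix.smul_apply, vecMulVec_apply, Pi.sub_apply,
    smul_eq_mul]
  rw [sampleCov_apply, Finset.sum_union hdisj,
    shift_sum Y₁ h₁ (sampleMean (Y₁ ∪ Y₂)) i j,
    shift_sum Y₂ h₂ (sampleMean (Y₁ ∪ Y₂)) i j,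
    hsum Y₁ h₁ i j, hsum Y₂ h₂ i j, hmean i, hmean j]
  rw [hcard] at *
  field_simp
  ring


lemma posSemidef_vecMulVec_self (v : Fin N → ℝ) : (vecMulVec v v).PosSemidef := by
  rw [vecMulVec_eq Unit]
  have : replicateRow Unit v = (replicateCol Unit v)ᴴ := by
    ext i j; simp [replicateRow_apply, replicateCol_apply, conjTranspose_apply]
  rw [this]
  exact posSemidef_self_mul_conjTranspose _

lemma posSemidef_smul_nonneg {A : Matrix (Fin N) (Fin N) ℝ} (hA : A.PosSemidef) {c : ℝ}
    (hc : 0 ≤ c) : (c • A).PosSemidef := by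
  refine ⟨?_, fun x => ?_⟩
  · unfold Matrix.IsHermitian
    rw [conjTranspose_smul, hA.1.eq]
    simp
  · exact (hA.smul hc).2 x

lemma posDef_smul_pos {A : Matrix (Fin N) (Fin N) ℝ} (hA : A.PosDef) {c : ℝ}
    (hc : 0 < c) : (c • A).PosDef := by
  refine ⟨?_, fun x hx => ?_⟩
  · unfold Matrix.IsHermitian
    rw [conjTranspose_smul, hA.1.eq]
    simp
  · exact (hA.smul hc).2 hx

open scoped MatrixOrder in
/-- Key structural lemma: for `A` positive definite and `B` positive semidefinite,
the determinant of `a•A + b•B` factors through the eigenvalues of `√A⁻¹ B √A⁻¹`. -/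
lemma det_smul_add_smul_eq {A B : Matrix (Fin N) (Fin N) ℝ} (hA : A.PosDef)
    (hB : B.PosSemidef) (a b : ℝ) :
    ∃ μ : Fin N → ℝ, (∀ i, 0 ≤ μ i) ∧
      (a • A + b • B).det = A.det * ∏ i, (a + b * μ i) ∧
      B.det = A.det * ∏ i, μ i := by
  classical
  set S := CFC.sqrt A with hSdef
  have hSS : S * S = A := CFC.sqrt_mul_sqrt_self A hA.posSemidef.nonneg
  have hSherm : S.IsHermitian := (CFC.sqrt_nonneg A).posSemidef.1
  have hSdet : S.det * S.det = A.det := by rw [← det_mul, hSS]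
  have hSdet0 : S.det ≠ 0 := by
    intro h
    rw [h, mul_zero] at hSdet
    exact hA.det_pos.ne hSdet
  have hSu : IsUnit S.det := isUnit_iff_ne_zero.2 hSdet0
  set M := S⁻¹ * B * S⁻¹ with hMdef
  have hSinvherm : (S⁻¹)ᴴ = S⁻¹ := by rw [conjTranspose_nonsing_inv, hSherm.eq]
  have hM : M.PosSemidef := by
    have := hB.mul_mul_conjTranspose_same S⁻¹
    rwa [hSinvherm] at this
  have hSMS : S * M * S = B := by
    rw [hMdef]
    calc S * (S⁻¹ * B * S⁻¹) * S = S * S⁻¹ * B * (S⁻¹ * S) := by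
          simp only [mul_assoc]
    _ = B := by rw [mul_nonsing_inv _ hSu, nonsing_inv_mul _ hSu, one_mul, mul_one]
  have hcomb : a • A + b • B = S * (a • 1 + b • M) * S := by
    rw [mul_add, add_mul]
    rw [Matrix.mul_smul, Matrix.smul_mul, Matrix.mul_smul, Matrix.smul_mul, mul_one, hSS, hSMS]
  set μ := hM.1.eigenvalues with hμdef
  refine ⟨μ, hM.eigenvalues_nonneg, ?_, ?_⟩
  · rw [hcomb, det_mul, det_mul]
    have : (a • 1 + b • M).det = ∏ i, (a + b * μ i) := by
      have spec := hM.1.spectral_theorem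
      set U := (hM.1.eigenvectorUnitary : Matrix (Fin N) (Fin N) ℝ) with hU
      have hUU : U * star U = 1 := Matrix.mem_unitaryGroup_iff.mp hM.1.eigenvectorUnitary.2
      have hdiag : (RCLike.ofReal ∘ μ : Fin N → ℝ) = μ := by ext i; simp
      have hMU : M = U * diagonal μ * star U := by rw [spec, hdiag, Unitary.conjStarAlgAut_apply]
      have : a • (1 : Matrix (Fin N) (Fin N) ℝ) + b • M
          = U * (diagonal fun i => a + b * μ i) * star U := by
        have hd : (diagonal fun i => a + b * μ i)
            = a • (1 : Matrix (Fin N) (Fin N) ℝ) + b • diagonal μ := by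
          ext i j
          by_cases h : i = j
          · subst h; simp [diagonal_apply_eq, Matrix.one_apply_eq]
          · simp [diagonal_apply_ne _ h, Matrix.one_apply_ne h]
        rw [hd, mul_add, add_mul, Matrix.mul_smul, Matrix.smul_mul, Matrix.mul_smul,
          Matrix.smul_mul, mul_one, hUU, ← hMU]
      rw [this, det_mul, det_mul, det_diagonal]
      have h1 : U.det * (star U).det = 1 := by rw [← det_mul, hUU, det_one]
      linear_combination (∏ i, (a + b * μ i)) * h1
    rw [this, mul_comm (S.det), mul_assoc, hSdet, mul_comm]
  · rw [← hSMS, det_mul, det_mul, mul_comm (S.det), mul_assoc, hSdet]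
    have : M.det = ∏ i, μ i := by
      have := hM.1.det_eq_prod_eigenvalues
      simpa using this
    rw [this, mul_comm]

lemma det_le_det_add_posSemidef {A W : Matrix (Fin N) (Fin N) ℝ} (hA : A.PosDef)
    (hW : W.PosSemidef) : A.det ≤ (A + W).det := by
  obtain ⟨μ, hμ, h1, -⟩ := det_smul_add_smul_eq hA hW 1 1
  rw [one_smul, one_smul] at h1
  rw [h1]
  have : (1:ℝ) ≤ ∏ i : Fin N, (1 + 1 * μ i) := by
    have := Finset.prod_le_prod (s := Finset.univ) (f := fun _ : Fin N => (1:ℝ))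
      (g := fun i => 1 + 1 * μ i) (fun i _ => zero_le_one) (fun i _ => by nlinarith [hμ i])
    simpa using this
  nlinarith [hA.det_pos]

lemma rpow_det_le_det_combo {A B : Matrix (Fin N) (Fin N) ℝ} (hA : A.PosDef) (hB : B.PosDef)
    {p q : ℝ} (hp : 0 ≤ p) (hq : 0 ≤ q) (hpq : p + q = 1) :
    A.det ^ p * B.det ^ q ≤ (p • A + q • B).det := by
  obtain ⟨μ, hμ, h1, h2⟩ := det_smul_add_smul_eq hA hB.posSemidef p q
  have hdA := hA.det_pos
  have hprodnn : (0:ℝ) ≤ ∏ i, μ i := Finset.prod_nonneg fun i _ => hμ i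
  have key : ∏ i, (μ i) ^ q ≤ ∏ i, (p + q * μ i) := by
    refine Finset.prod_le_prod (fun i _ => Real.rpow_nonneg (hμ i) q) (fun i _ => ?_)
    have := Real.geom_mean_le_arith_mean2_weighted hp hq zero_le_one (hμ i) hpq
    simpa using this
  have hprodpow : (∏ i, μ i) ^ q = ∏ i, (μ i) ^ q :=
    (Real.finset_prod_rpow Finset.univ μ (fun i _ => hμ i) q).symm
  have hBdet : B.det ^ q = A.det ^ q * (∏ i, μ i) ^ q := by
    rw [h2, Real.mul_rpow hdA.le hprodnn]
  calc A.det ^ p * B.det ^ q = A.det * (∏ i, μ i) ^ q := by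
        rw [hBdet, ← mul_assoc, ← Real.rpow_add hdA, hpq, Real.rpow_one]
    _ ≤ A.det * ∏ i, (p + q * μ i) := by
        rw [hprodpow]
        exact mul_le_mul_of_nonneg_left key hdA.le
    _ = (p • A + q • B).det := h1.symm

/-- Differential entropy of the Gaussian `N(μ, Σ)` on `ℝ^N`:
`(N/2)·ln(2πe) + (1/2)·ln det Σ`. -/
noncomputable def gaussEntropy (N : ℕ) (S : Matrix (Fin N) (Fin N) ℝ) : ℝ :=
  (N : ℝ) / 2 * Real.log (2 * Real.pi * Real.exp 1) + 1 / 2 * Real.log S.det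

theorem merging_increases_gauss_entropy {N : ℕ} (Y₁ Y₂ : Finset (Fin N → ℝ))
    (h₁ : Y₁.Nonempty) (h₂ : Y₂.Nonempty) (hdisj : Disjoint Y₁ Y₂)
    (X : Finset (Fin N → ℝ)) (hX : X = Y₁ ∪ Y₂)
    (hc₁ : (sampleCov Y₁).PosDef) (hc₂ : (sampleCov Y₂).PosDef)
    (p : ℝ) (hp : p = (Y₁.card : ℝ) / X.card) :
    p * gaussEntropy N (sampleCov Y₁) + (1 - p) * gaussEntropy N (sampleCov Y₂)
      ≤ gaussEntropy N (sampleCov X) := by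
  subst hX
  have hn₁ : (0:ℝ) < Y₁.card := by exact_mod_cast Finset.card_pos.2 h₁
  have hn₂ : (0:ℝ) < Y₂.card := by exact_mod_cast Finset.card_pos.2 h₂
  have hcard : ((Y₁ ∪ Y₂).card : ℝ) = (Y₁.card : ℝ) + Y₂.card := by
    rw [Finset.card_union_of_disjoint hdisj]; push_cast; ring
  have hn : (0:ℝ) < ((Y₁ ∪ Y₂).card : ℝ) := by rw [hcard]; linarith
  have hp0 : 0 < p := by rw [hp]; positivity
  have hq : 1 - p = (Y₂.card : ℝ) / ((Y₁ ∪ Y₂).card : ℝ) := by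
    rw [hp, hcard]; field_simp
    ring
  have hq0 : 0 < 1 - p := by rw [hq]; positivity
  set d := sampleMean Y₁ - sampleMean Y₂ with hd
  have hdecomp : sampleCov (Y₁ ∪ Y₂)
      = (p • sampleCov Y₁ + (1 - p) • sampleCov Y₂) + (p * (1 - p)) • vecMulVec d d := by
    rw [cov_union Y₁ Y₂ h₁ h₂ hdisj, ← hp, ← hq, add_assoc]
  set C := p • sampleCov Y₁ + (1 - p) • sampleCov Y₂ with hC
  have hcombo : C.PosDef := (posDef_smul_pos hc₁ hp0).add (posDef_smul_pos hc₂ hq0)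
  have hpsd : ((p * (1 - p)) • vecMulVec d d).PosSemidef :=
    posSemidef_smul_nonneg (posSemidef_vecMulVec_self d) (mul_nonneg hp0.le hq0.le)
  have det₁ : (sampleCov Y₁).det ^ p * (sampleCov Y₂).det ^ (1 - p) ≤ C.det :=
    rpow_det_le_det_combo hc₁ hc₂ hp0.le hq0.le (by ring)
  have det₂ : C.det ≤ (sampleCov (Y₁ ∪ Y₂)).det := by
    rw [hdecomp]
    exact det_le_det_add_posSemidef hcombo hpsd
  have hlhspos : 0 < (sampleCov Y₁).det ^ p * (sampleCov Y₂).det ^ (1 - p) :=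
    mul_pos (Real.rpow_pos_of_pos hc₁.det_pos p) (Real.rpow_pos_of_pos hc₂.det_pos (1 - p))
  have hlog : p * Real.log (sampleCov Y₁).det + (1 - p) * Real.log (sampleCov Y₂).det
      ≤ Real.log (sampleCov (Y₁ ∪ Y₂)).det := by
    have h := Real.log_le_log hlhspos (det₁.trans det₂)
    rwa [Real.log_mul (Real.rpow_pos_of_pos hc₁.det_pos p).ne'
      (Real.rpow_pos_of_pos hc₂.det_pos (1 - p)).ne',
      Real.log_rpow hc₁.det_pos, Real.log_rpow hc₂.det_pos] at h
  unfold gaussEntropy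
  set c := (N : ℝ) / 2 * Real.log (2 * Real.pi * Real.exp 1)
  set L₁ := Real.log (sampleCov Y₁).det
  set L₂ := Real.log (sampleCov Y₂).det
  set LX := Real.log (sampleCov (Y₁ ∪ Y₂)).det
  have : p * (c + 1 / 2 * L₁) + (1 - p) * (c + 1 / 2 * L₂)
      = c + 1 / 2 * (p * L₁ + (1 - p) * L₂) := by ring
  rw [this]
  linarith
end

section
/- Robustness to random labeling for β < 1: let Y be a proportional coarsening of Z and Ỹ a coarsening of Y with H(Y) > H(Ỹ). If β < 1, then H(Y) + β·H(Z|Y) > H(Ỹ) + β·H(Z|Ỹ). -/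
/-- Entropy of a partition `Y` of a finite set `X`, with empirical probabilities. -/
noncomputable def partEntropy {α : Type*} (X : Finset α) {k : ℕ} (Y : Fin k → Finset α) : ℝ :=
  -∑ i, ((Y i).card : ℝ) / X.card * Real.log (((Y i).card : ℝ) / X.card)

/-- Conditional entropy `H(Z|Y) = Σᵢ (|Yᵢ|/|X|)·H(Z | Yᵢ ∩ X_ℓ)` with empirical
probabilities (with the convention `0·log 0 = 0`, automatic since `Real.log 0 = 0`). -/
noncomputable def condEntropy {α : Type*} [DecidableEq α] (X Xl : Finset α)
    {k m : ℕ} (Y : Fin k → Finset α) (Z : Fin m → Finset α) : ℝ :=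
  ∑ i, ((Y i).card : ℝ) / X.card *
    (-∑ j, ((Y i ∩ Z j).card : ℝ) / ((Y i ∩ Xl).card) *
        Real.log (((Y i ∩ Z j).card : ℝ) / ((Y i ∩ Xl).card)))

lemma chain_rule {α : Type*} [DecidableEq α] (X Xl : Finset α) (hXl : Xl.Nonempty)
    {k m : ℕ} (Y : Fin k → Finset α) (Z : Fin m → Finset α)
    (hYd : ∀ i i', i ≠ i' → Disjoint (Y i) (Y i'))
    (hZd : ∀ j j', j ≠ j' → Disjoint (Z j) (Z j'))
    (hZu : Finset.univ.biUnion Z = Xl)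
    (hcoarse : ∀ j, ∃ i, Z j ⊆ Y i)
    (hprop : ∀ i, ((Y i).card : ℝ) / X.card = ((Y i ∩ Xl).card : ℝ) / Xl.card) :
    partEntropy X Y + condEntropy X Xl Y Z
      = -∑ j, ((Z j).card : ℝ) / Xl.card * Real.log (((Z j).card : ℝ) / Xl.card) := by
  have hN : (0:ℝ) < Xl.card := by exact_mod_cast Finset.card_pos.mpr hXl
  have hZsub : ∀ j, Z j ⊆ Xl := fun j => hZu ▸ Finset.subset_biUnion_of_mem Z (Finset.mem_univ j)
  have hsum : ∀ i, ∑ j, ((Y i ∩ Z j).card : ℝ) = ((Y i ∩ Xl).card : ℝ) := by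
    intro i
    have h1 : Y i ∩ Xl = Finset.univ.biUnion (fun j => Y i ∩ Z j) := by
      rw [← hZu, Finset.inter_biUnion]
    rw [h1, Finset.card_biUnion]
    · push_cast; ring
    · intro j _ j' _ hne
      exact Finset.disjoint_of_subset_left Finset.inter_subset_right
        (Finset.disjoint_of_subset_right Finset.inter_subset_right (hZd j j' hne))
  have key : ∀ i, -(((Y i).card : ℝ)/X.card * Real.log (((Y i).card:ℝ)/X.card))
      + ((Y i).card:ℝ)/X.card * (-∑ j, ((Y i ∩ Z j).card : ℝ)/((Y i ∩ Xl).card) *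
          Real.log (((Y i ∩ Z j).card : ℝ)/((Y i ∩ Xl).card)))
      = -∑ j, ((Y i ∩ Z j).card:ℝ)/Xl.card * Real.log (((Y i ∩ Z j).card:ℝ)/Xl.card) := by
    intro i
    rw [hprop i]
    rcases eq_or_lt_of_le (by positivity : (0:ℝ) ≤ ((Y i ∩ Xl).card : ℝ)) with h0 | h0
    · have hc : ∀ j, ((Y i ∩ Z j).card : ℝ) = 0 := by
        intro j
        have hss : Y i ∩ Z j ⊆ Y i ∩ Xl :=
          Finset.inter_subset_inter (le_refl _) (hZsub j)
        have hle := Finset.card_le_card hss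
        have h0' : (Y i ∩ Xl).card = 0 := by exact_mod_cast h0.symm
        have : (Y i ∩ Z j).card = 0 := by omega
        exact_mod_cast this
      simp [hc, ← h0]
    · have hsne : ((Y i ∩ Xl).card : ℝ) ≠ 0 := ne_of_gt h0
      have perj : ∀ j, ((Y i ∩ Xl).card:ℝ)/Xl.card * (((Y i ∩ Z j).card : ℝ)/((Y i ∩ Xl).card) *
          Real.log (((Y i ∩ Z j).card : ℝ)/((Y i ∩ Xl).card)))
          = ((Y i ∩ Z j).card:ℝ)/Xl.card * Real.log (((Y i ∩ Z j).card:ℝ)/Xl.card)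
            - ((Y i ∩ Z j).card:ℝ)/Xl.card * Real.log (((Y i ∩ Xl).card:ℝ)/Xl.card) := by
        intro j
        rcases eq_or_lt_of_le (by positivity : (0:ℝ) ≤ ((Y i ∩ Z j).card : ℝ)) with hc0 | hc0
        · rw [← hc0]; simp
        · have hcne : ((Y i ∩ Z j).card : ℝ) ≠ 0 := ne_of_gt hc0
          rw [Real.log_div hcne hsne, Real.log_div hcne (ne_of_gt hN),
            Real.log_div hsne (ne_of_gt hN)]
          field_simp
          ring
      have e1 : (((Y i ∩ Xl).card:ℝ)/Xl.card) *
          (∑ j, ((Y i ∩ Z j).card : ℝ)/((Y i ∩ Xl).card) *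
            Real.log (((Y i ∩ Z j).card : ℝ)/((Y i ∩ Xl).card)))
          = (∑ j, ((Y i ∩ Z j).card:ℝ)/Xl.card * Real.log (((Y i ∩ Z j).card:ℝ)/Xl.card))
            - (((Y i ∩ Xl).card:ℝ)/Xl.card) * Real.log (((Y i ∩ Xl).card:ℝ)/Xl.card) := by
        rw [Finset.mul_sum, Finset.sum_congr rfl fun j _ => perj j, Finset.sum_sub_distrib,
          ← Finset.sum_mul, ← Finset.sum_div, hsum i]
      rw [mul_neg]
      linarith [e1]
  have perj2 : ∀ j : Fin m, ∑ i, ((Y i ∩ Z j).card:ℝ)/Xl.card * Real.log (((Y i ∩ Z j).card:ℝ)/Xl.card)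
      = ((Z j).card : ℝ) / Xl.card * Real.log (((Z j).card : ℝ) / Xl.card) := by
    intro j
    obtain ⟨i0, hi0⟩ := hcoarse j
    rw [Fintype.sum_eq_single i0]
    · rw [Finset.inter_eq_right.mpr hi0]
    · intro i hne
      have hemp : Y i ∩ Z j = ∅ := by
        apply Finset.subset_empty.mp
        calc Y i ∩ Z j ⊆ Y i ∩ Y i0 := Finset.inter_subset_inter (le_refl _) hi0
          _ = ∅ := Finset.disjoint_iff_inter_eq_empty.mp (hYd i i0 hne)
      simp [hemp]
  calc partEntropy X Y + condEntropy X Xl Y Z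
      = ∑ i, (-(((Y i).card : ℝ)/X.card * Real.log (((Y i).card:ℝ)/X.card))
        + ((Y i).card:ℝ)/X.card * (-∑ j, ((Y i ∩ Z j).card : ℝ)/((Y i ∩ Xl).card) *
            Real.log (((Y i ∩ Z j).card : ℝ)/((Y i ∩ Xl).card)))) := by
        rw [partEntropy, condEntropy, ← Finset.sum_neg_distrib, ← Finset.sum_add_distrib]
    _ = ∑ i, -∑ j, ((Y i ∩ Z j).card:ℝ)/Xl.card * Real.log (((Y i ∩ Z j).card:ℝ)/Xl.card) :=
        Finset.sum_congr rfl fun i _ => key i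
    _ = -∑ j, ∑ i, ((Y i ∩ Z j).card:ℝ)/Xl.card * Real.log (((Y i ∩ Z j).card:ℝ)/Xl.card) := by
        rw [Finset.sum_neg_distrib, Finset.sum_comm]
    _ = -∑ j, ((Z j).card : ℝ) / Xl.card * Real.log (((Z j).card : ℝ) / Xl.card) := by
        rw [Finset.sum_congr rfl fun j _ => perj2 j]

theorem robust_to_random_labeling_beta_lt_one {α : Type*} [DecidableEq α]
    (X Xl : Finset α) (hsub : Xl ⊆ X) (hXl : Xl.Nonempty)
    {k k' m : ℕ} (Y : Fin k → Finset α) (tY : Fin k' → Finset α) (Z : Fin m → Finset α)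
    (hYd : ∀ i i', i ≠ i' → Disjoint (Y i) (Y i'))
    (hYu : Finset.univ.biUnion Y = X)
    (hZd : ∀ j j', j ≠ j' → Disjoint (Z j) (Z j'))
    (hZu : Finset.univ.biUnion Z = Xl)
    (hcoarse : ∀ j, ∃ i, Z j ⊆ Y i)
    (hprop : ∀ i, ((Y i).card : ℝ) / X.card = ((Y i ∩ Xl).card : ℝ) / Xl.card)
    (g : Fin k → Fin k')
    (htY : ∀ r, tY r = (Finset.univ.filter (fun i => g i = r)).biUnion Y)
    (hH : partEntropy X tY < partEntropy X Y)
    (β : ℝ) (hβ : β < 1) :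
    partEntropy X tY + β * condEntropy X Xl tY Z
      < partEntropy X Y + β * condEntropy X Xl Y Z := by
  have htYd : ∀ r r', r ≠ r' → Disjoint (tY r) (tY r') := by
    intro r r' hne
    rw [htY r, htY r', Finset.disjoint_biUnion_left]
    intro i hi
    rw [Finset.disjoint_biUnion_right]
    intro i' hi'
    apply hYd
    rintro rfl
    simp only [Finset.mem_filter] at hi hi'
    exact hne (hi.2 ▸ hi'.2)
  have htcoarse : ∀ j, ∃ r, Z j ⊆ tY r := by
    intro j
    obtain ⟨i, hi⟩ := hcoarse j
    refine ⟨g i, hi.trans ?_⟩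
    rw [htY (g i)]
    exact Finset.subset_biUnion_of_mem Y (by simp)
  have htprop : ∀ r, ((tY r).card : ℝ) / X.card = ((tY r ∩ Xl).card : ℝ) / Xl.card := by
    intro r
    have hd : ∀ i ∈ Finset.univ.filter (fun i => g i = r),
        ∀ i' ∈ Finset.univ.filter (fun i => g i = r), i ≠ i' → Disjoint (Y i) (Y i') :=
      fun i _ i' _ hne => hYd i i' hne
    have h1 : ((tY r).card : ℝ) = ∑ i ∈ Finset.univ.filter (fun i => g i = r), ((Y i).card : ℝ) := by
      rw [htY r, Finset.card_biUnion hd]; push_cast; ring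
    have h2 : ((tY r ∩ Xl).card : ℝ)
        = ∑ i ∈ Finset.univ.filter (fun i => g i = r), ((Y i ∩ Xl).card : ℝ) := by
      rw [htY r, Finset.biUnion_inter, Finset.card_biUnion]
      · push_cast; ring
      · intro i hi i' hi' hne
        exact Finset.disjoint_of_subset_left Finset.inter_subset_left
          (Finset.disjoint_of_subset_right Finset.inter_subset_left (hYd i i' hne))
    rw [h1, h2, Finset.sum_div, Finset.sum_div]
    exact Finset.sum_congr rfl fun i _ => hprop i
  have e1 := chain_rule X Xl hXl Y Z hYd hZd hZu hcoarse hprop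
  have e2 := chain_rule X Xl hXl tY Z htYd hZd hZu htcoarse htprop
  have hd : condEntropy X Xl tY Z
      = condEntropy X Xl Y Z + (partEntropy X Y - partEntropy X tY) := by linarith
  rw [hd]
  nlinarith [mul_pos (by linarith : (0:ℝ) < 1 - β)
    (by linarith : (0:ℝ) < partEntropy X Y - partEntropy X tY)]
end
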